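/- The quasi-distance δ_Φ associated to Φ is a quasi-distance: there exists a constant K = K(n,s) ≥ 1 such that for all p₁, p₂, p₃ ∈ ℝ^{n+1}, δ_Φ(p₁,p₂) ≤ K ( min{δ_Φ(p₁,p₃), δ_Φ(p₃,p₁)} + min{δ_Φ(p₂,p₃), δ_Φ(p₃,p₂)} ). -/

import Mathlib

open Set MeasureTheory
open scoped ENNReal

noncomputable section

/-- `h(z) = (s²/(1-s))|z|^{1/s}`. -/
def hFun (s z : ℝ) : ℝ := s ^ 2 / (1 - s) * |z| ^ (1 / s)

/-- `h'(z) = (s/(1-s))|z|^{1/s-2} z` (with `h'(0)=0`). -/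
def hDeriv (s z : ℝ) : ℝ := s / (1 - s) * |z| ^ (1 / s - 2) * z

/-- Monge–Ampère quasi-distance of `h`. -/
def deltaH (s z₀ z : ℝ) : ℝ := hFun s z - hFun s z₀ - hDeriv s z₀ * (z - z₀)

/-- Monge–Ampère quasi-distance of `φ(x)=|x|²/2` on `ℝⁿ`. -/
def deltaE (n : ℕ) (x₀ x : Fin n → ℝ) : ℝ := (∑ i, (x i - x₀ i) ^ 2) / 2

/-- Monge–Ampère quasi-distance of `Φ(x,z) = |x|²/2 + h(z)`. -/
def deltaPhi (n : ℕ) (s : ℝ) (p q : (Fin n → ℝ) × ℝ) : ℝ :=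
  deltaE n p.1 q.1 + deltaH s p.2 q.2

/-- Monge–Ampère section of `Φ` of radius `R` centered at `p`. -/
def sectPhi (n : ℕ) (s R : ℝ) (p : (Fin n → ℝ) × ℝ) : Set ((Fin n → ℝ) × ℝ) :=
  {q | deltaPhi n s p q < R}

/-- Monge–Ampère section of `h` of radius `R` centered at `z₀`. -/
def sectH (s R z₀ : ℝ) : Set ℝ := {z | deltaH s z₀ z < R}

/-- One-dimensional section of `t ↦ t²/2` of radius `R` centered at `t₀`. -/
def sect1 (R t₀ : ℝ) : Set ℝ := {t | (t - t₀) ^ 2 / 2 < R}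

/-- Monge–Ampère cube of radius `R` centered at `p`. -/
def cube (n : ℕ) (s R : ℝ) (p : (Fin n → ℝ) × ℝ) : Set ((Fin n → ℝ) × ℝ) :=
  {q | (∀ i, q.1 i ∈ sect1 R (p.1 i)) ∧ q.2 ∈ sectH s R p.2}

/-- Monge–Ampère measure of `Φ`: `μ_Φ(E) = ∫_E |z|^{1/s-2} dz dx`. -/
def muPhi (n : ℕ) (s : ℝ) (E : Set ((Fin n → ℝ) × ℝ)) : ℝ≥0∞ :=
  ∫⁻ p in E, ENNReal.ofReal (|p.2| ^ (1 / s - 2))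

/-- Monge–Ampère measure of `h`: `μ_h(I) = ∫_I |z|^{1/s-2} dz`. -/
def muH (s : ℝ) (I : Set ℝ) : ℝ≥0∞ :=
  ∫⁻ z in I, ENNReal.ofReal (|z| ^ (1 / s - 2))

/-- Second partial derivative `∂_{ij}` in the `x`-variables. -/
def Dxx (n : ℕ) (U : (Fin n → ℝ) × ℝ → ℝ) (i j : Fin n) (p : (Fin n → ℝ) × ℝ) : ℝ :=
  fderiv ℝ (fun y : Fin n → ℝ =>
    fderiv ℝ (fun y' : Fin n → ℝ => U (y', p.2)) y (Pi.single j 1)) p.1 (Pi.single i 1)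

/-- Second partial derivative `∂_{zz}`. -/
def Dzz (n : ℕ) (U : (Fin n → ℝ) × ℝ → ℝ) (p : (Fin n → ℝ) × ℝ) : ℝ :=
  deriv (fun w => deriv (fun w' => U (p.1, w')) w) p.2

/-- The extension operator `a^{ij}(x) ∂_{ij} + |z|^{2-1/s} ∂_{zz}`. -/
def extOp (n : ℕ) (s : ℝ) (A : (Fin n → ℝ) → Fin n → Fin n → ℝ)
    (U : (Fin n → ℝ) × ℝ → ℝ) (p : (Fin n → ℝ) × ℝ) : ℝ :=
  (∑ i, ∑ j, A p.1 i j * Dxx n U i j p) + |p.2| ^ (2 - 1 / s) * Dzz n U p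

/-- Bounded measurable, symmetric, uniformly elliptic coefficients on `Ω`. -/
def UniformlyElliptic (n : ℕ) (lam Lam : ℝ) (Ω : Set (Fin n → ℝ))
    (A : (Fin n → ℝ) → Fin n → Fin n → ℝ) : Prop :=
  (∀ i j, Measurable fun x => A x i j) ∧
  (∀ x i j, A x i j = A x j i) ∧
  (∀ x ∈ Ω, ∀ ξ : Fin n → ℝ,
    lam * ∑ i, ξ i ^ 2 ≤ ∑ i, ∑ j, A x i j * ξ i * ξ j ∧
    (∑ i, ∑ j, A x i j * ξ i * ξ j) ≤ Lam * ∑ i, ξ i ^ 2)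

/-- A paraboloid of opening `a > 0` with vertex `v`. -/
def IsParaboloid (n : ℕ) (s a : ℝ) (v : (Fin n → ℝ) × ℝ) (P : (Fin n → ℝ) × ℝ → ℝ) : Prop :=
  ∃ c : ℝ, ∀ p, P p = -a * deltaPhi n s v p + c

/-- `P` touches `U` from below at `p₀` in the set `S`. -/
def TouchesBelow (n : ℕ) (P U : (Fin n → ℝ) × ℝ → ℝ)
    (S : Set ((Fin n → ℝ) × ℝ)) (p₀ : (Fin n → ℝ) × ℝ) : Prop :=
  P p₀ = U p₀ ∧ ∀ p ∈ S, P p ≤ U p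



section QuasiDistAux
open Real Set

def uF (s z : ℝ) : ℝ := Real.sign z * |z| ^ (1/(2*s))


lemma bern_neg {β t : ℝ} (hβ : β ≤ 0) (ht : 0 < t) : 1 + β * (t - 1) ≤ t ^ β := by
  have h1 : β * (t - 1) ≤ β * Real.log t :=
    mul_le_mul_of_nonpos_left (Real.log_le_sub_one_of_pos ht) hβ
  have h2 := Real.add_one_le_exp (β * Real.log t)
  rw [Real.rpow_def_of_pos ht]
  rw [mul_comm β (Real.log t)] at h1 h2
  linarith

lemma bern_upper {t β : ℝ} (ht : 0 < t) (h0 : 0 ≤ β) (h1 : β ≤ 1) :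
    t ^ β ≤ 1 + β * (t - 1) := by
  have := rpow_one_add_le_one_add_mul_self (s := t - 1) (by linarith) h0 h1
  simpa using this

lemma est1 {q v : ℝ} (hq0 : 0 < q) (hq2 : q < 2) (hv : 1 ≤ v) :
    (2 - q)/2 * (v - 1) ≤ v - v ^ (q - 1) := by
  have hv0 : 0 < v := lt_of_lt_of_le one_pos hv
  rcases le_or_gt q 1 with h | h
  · have : v ^ (q - 1) ≤ 1 := Real.rpow_le_one_of_one_le_of_nonpos hv (by linarith)
    nlinarith
  · have := bern_upper hv0 (by linarith : (0:ℝ) ≤ q - 1) (by linarith)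
    nlinarith

lemma est2 {q v : ℝ} (hq0 : 0 < q) (hq2 : q < 2) (hv : 1 ≤ v) :
    v - v ^ (q - 1) ≤ 2 * (v - 1) := by
  have hv0 : 0 < v := lt_of_lt_of_le one_pos hv
  rcases le_or_gt q 1 with h | h
  · have := bern_neg (β := q - 1) (by linarith) hv0
    nlinarith
  · have h1 := Real.rpow_le_rpow_of_exponent_le hv (show (0:ℝ) ≤ q - 1 by linarith)
    rw [Real.rpow_zero] at h1
    nlinarith

lemma est3 {q v : ℝ} (hq2 : q < 2) (hv0 : 0 < v) (hv1 : v ≤ 1) :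
    (2 - q) * v * (1 - v) ≤ v ^ (q - 1) - v := by
  have hb := bern_neg (β := q - 2) (by linarith) hv0
  have key : v * v ^ (q - 2) = v ^ (q - 1) := by
    rw [show q - 1 = 1 + (q - 2) by ring, Real.rpow_add hv0, Real.rpow_one]
  nlinarith [mul_le_mul_of_nonneg_left hb (le_of_lt hv0)]

lemma est4 {q v : ℝ} (hq0 : 0 < q) (hv0 : 0 < v) (hv1 : v ≤ 1) :
    v ^ (q - 1) ≤ 1 / v := by
  have h1 : v ^ (q - 1) ≤ v ^ (-1 : ℝ) :=
    Real.rpow_le_rpow_of_exponent_ge hv0 hv1 (by linarith)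
  rw [Real.rpow_neg_one] at h1
  rwa [one_div]

lemma est5 {q v : ℝ} (hq2 : q < 2) (hv0 : 0 < v) (hv1 : v ≤ 1) :
    v ≤ v ^ (q - 1) := by
  have h1 : v ^ (1:ℝ) ≤ v ^ (q - 1) :=
    Real.rpow_le_rpow_of_exponent_ge hv0 hv1 (by linarith)
  rwa [Real.rpow_one] at h1

lemma hasDerivAt_G {p q : ℝ} (hpq : p * q = 2) (c : ℝ) {v : ℝ} (hv : 0 < v) :
    HasDerivAt (fun v => v^2 - 1 - p*(v ^ q - 1) - c*(v-1)^2)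
      (2*v - 2*v^(q-1) - c*(2*(v-1))) v := by
  have h1 : HasDerivAt (fun v : ℝ => v^2) (2*v) v := by
    simpa using hasDerivAt_pow 2 v
  have h2 : HasDerivAt (fun v : ℝ => v ^ q) (q * v^(q-1)) v :=
    Real.hasDerivAt_rpow_const (Or.inl hv.ne')
  have h3 : HasDerivAt (fun v : ℝ => (v-1)^2) (2*(v-1)) v := by
    simpa using ((hasDerivAt_id v).sub_const 1).fun_pow 2
  have := ((h1.sub_const 1).sub ((h2.sub_const 1).const_mul p)).sub (h3.const_mul c)
  refine this.congr_deriv ?_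
  have : p * (q * v ^ (q-1)) = 2 * v ^ (q-1) := by rw [← mul_assoc, hpq]
  linarith

lemma contG {p q : ℝ} (hq0 : 0 < q) (c : ℝ) :
    Continuous (fun v : ℝ => v^2 - 1 - p*(v ^ q - 1) - c*(v-1)^2) := by
  have hc : Continuous fun v : ℝ => v ^ q :=
    continuous_id.rpow_const (fun x => Or.inr hq0.le)
  continuity

lemma G_one {p q : ℝ} (c : ℝ) :
    (fun v : ℝ => v^2 - 1 - p*(v ^ q - 1) - c*(v-1)^2) 1 = 0 := by
  simp [Real.one_rpow]

-- P1 lower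
lemma P1_lower {p q : ℝ} (hq0 : 0 < q) (hq2 : q < 2) (hpq : p * q = 2)
    {v : ℝ} (hv : 1 ≤ v) :
    (2-q)/2 * (v-1)^2 ≤ v^2 - 1 - p*(v ^ q - 1) := by
  set G := fun v : ℝ => v^2 - 1 - p*(v ^ q - 1) - (2-q)/2*(v-1)^2 with hG
  have mono : MonotoneOn G (Ici 1) := by
    apply monotoneOn_of_deriv_nonneg (convex_Ici 1) (contG hq0 _).continuousOn
    · intro x hx
      rw [interior_Ici] at hx
      exact (hasDerivAt_G hpq _ (by linarith [mem_Ioi.mp hx] : (0:ℝ) < x)).differentiableAt.differentiableWithinAt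
    · intro x hx
      rw [interior_Ici] at hx
      have hx1 : 1 ≤ x := le_of_lt (mem_Ioi.mp hx)
      rw [(hasDerivAt_G hpq _ (by linarith : (0:ℝ) < x)).deriv]
      have := est1 hq0 hq2 hx1
      nlinarith
  have h0 := mono (self_mem_Ici) (mem_Ici.mpr hv) hv
  have hG1 : G 1 = 0 := by simp [hG, Real.one_rpow]
  rw [hG1] at h0
  simp only [hG] at h0
  linarith

-- P1 upper
lemma P1_upper {p q : ℝ} (hq0 : 0 < q) (hq2 : q < 2) (hpq : p * q = 2)
    {v : ℝ} (hv : 1 ≤ v) :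
    v^2 - 1 - p*(v ^ q - 1) ≤ 2 * (v-1)^2 := by
  set G := fun v : ℝ => v^2 - 1 - p*(v ^ q - 1) - 2*(v-1)^2 with hG
  have anti : AntitoneOn G (Ici 1) := by
    apply antitoneOn_of_deriv_nonpos (convex_Ici 1) (contG hq0 _).continuousOn
    · intro x hx
      rw [interior_Ici] at hx
      exact (hasDerivAt_G hpq _ (by linarith [mem_Ioi.mp hx] : (0:ℝ) < x)).differentiableAt.differentiableWithinAt
    · intro x hx
      rw [interior_Ici] at hx
      have hx1 : 1 ≤ x := le_of_lt (mem_Ioi.mp hx)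
      rw [(hasDerivAt_G hpq _ (by linarith : (0:ℝ) < x)).deriv]
      have := est2 hq0 hq2 hx1
      nlinarith
  have h0 := anti (self_mem_Ici) (mem_Ici.mpr hv) hv
  have hG1 : G 1 = 0 := by simp [hG, Real.one_rpow]
  rw [hG1] at h0
  simp only [hG] at h0
  linarith

-- P2 lower, on [1/2, 1]
lemma P2_lower {p q : ℝ} (hq0 : 0 < q) (hq2 : q < 2) (hpq : p * q = 2)
    {v : ℝ} (hv : 1/2 ≤ v) (hv1 : v ≤ 1) :
    (2-q)/2 * (v-1)^2 ≤ v^2 - 1 - p*(v ^ q - 1) := by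
  set G := fun v : ℝ => v^2 - 1 - p*(v ^ q - 1) - (2-q)/2*(v-1)^2 with hG
  have anti : AntitoneOn G (Icc (1/2) 1) := by
    apply antitoneOn_of_deriv_nonpos (convex_Icc _ _) (contG hq0 _).continuousOn
    · intro x hx
      rw [interior_Icc] at hx
      exact (hasDerivAt_G hpq _ (by linarith [hx.1] : (0:ℝ) < x)).differentiableAt.differentiableWithinAt
    · intro x hx
      rw [interior_Icc] at hx
      obtain ⟨hxl, hxr⟩ := hx
      rw [(hasDerivAt_G hpq _ (by linarith : (0:ℝ) < x)).deriv]
      have := est3 hq2 (by linarith : (0:ℝ) < x) (le_of_lt hxr)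
      have hkey : 0 ≤ (2-q)*(1-x)*(2*x-1) :=
        mul_nonneg (mul_nonneg (by linarith) (by linarith)) (by linarith)
      nlinarith
  have h0 := anti (mem_Icc.mpr ⟨hv, hv1⟩) (mem_Icc.mpr ⟨by norm_num, le_refl 1⟩) hv1
  have hG1 : G 1 = 0 := by simp [hG, Real.one_rpow]
  rw [hG1] at h0
  simp only [hG] at h0
  linarith

-- P2 upper, on [1/2, 1]
lemma P2_upper {p q : ℝ} (hq0 : 0 < q) (hq2 : q < 2) (hpq : p * q = 2)
    {v : ℝ} (hv : 1/2 ≤ v) (hv1 : v ≤ 1) :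
    v^2 - 1 - p*(v ^ q - 1) ≤ 8 * (v-1)^2 := by
  set G := fun v : ℝ => v^2 - 1 - p*(v ^ q - 1) - 8*(v-1)^2 with hG
  have mono : MonotoneOn G (Icc (1/2) 1) := by
    apply monotoneOn_of_deriv_nonneg (convex_Icc _ _) (contG hq0 _).continuousOn
    · intro x hx
      rw [interior_Icc] at hx
      exact (hasDerivAt_G hpq _ (by linarith [hx.1] : (0:ℝ) < x)).differentiableAt.differentiableWithinAt
    · intro x hx
      rw [interior_Icc] at hx
      obtain ⟨hxl, hxr⟩ := hx
      have hx0 : (0:ℝ) < x := by linarith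
      rw [(hasDerivAt_G hpq _ hx0).deriv]
      have h4 := est4 hq0 hx0 (le_of_lt hxr)
      -- v^(q-1) ≤ 1/x ; so x^(q-1) - x ≤ 1/x - x = (1-x)(1+x)/x ≤ 4(1-x)
      have hxx : 1/x ≤ 2 := by rw [div_le_iff₀ hx0]; linarith
      have h5 : x ^ (q-1) - x ≤ 4*(1-x) := by
        have : 1/x - x ≤ 4*(1-x) := by
          rw [div_sub' hx0.ne', div_le_iff₀ hx0]
          nlinarith
        linarith
      nlinarith
  have h0 := mono (mem_Icc.mpr ⟨hv, hv1⟩) (mem_Icc.mpr ⟨by norm_num, le_refl 1⟩) hv1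
  have hG1 : G 1 = 0 := by simp [hG, Real.one_rpow]
  rw [hG1] at h0
  simp only [hG] at h0
  linarith

-- P3 : F is antitone on [0, 1/2]
lemma P3_anti {p q : ℝ} (hq0 : 0 < q) (hq2 : q < 2) (hpq : p * q = 2) :
    AntitoneOn (fun v : ℝ => v^2 - 1 - p*(v ^ q - 1) - 0*(v-1)^2) (Icc 0 (1/2)) := by
  apply antitoneOn_of_deriv_nonpos (convex_Icc _ _) (contG hq0 _).continuousOn
  · intro x hx
    rw [interior_Icc] at hx
    exact (hasDerivAt_G hpq _ hx.1).differentiableAt.differentiableWithinAt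
  · intro x hx
    rw [interior_Icc] at hx
    obtain ⟨hxl, hxr⟩ := hx
    rw [(hasDerivAt_G hpq _ hxl).deriv]
    have := est5 hq2 hxl (by linarith)
    nlinarith

lemma Fcomp {p q : ℝ} (hq0 : 0 < q) (hq2 : q < 2) (hpq : p * q = 2) {v : ℝ} (hv : 0 ≤ v) :
    (2-q)/8 * (v-1)^2 ≤ v^2 - 1 - p*(v ^ q - 1) ∧
    v^2 - 1 - p*(v ^ q - 1) ≤ (8 + 4*p) * (v-1)^2 := by
  have hp1 : 1 < p := by nlinarith
  rcases le_or_gt 1 v with h1 | h1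
  · have hl := P1_lower hq0 hq2 hpq h1
    have hu := P1_upper hq0 hq2 hpq h1
    constructor
    · nlinarith [sq_nonneg (v-1)]
    · nlinarith [sq_nonneg (v-1)]
  rcases le_or_gt (1/2) v with h2 | h2
  · have hl := P2_lower hq0 hq2 hpq h2 (le_of_lt h1)
    have hu := P2_upper hq0 hq2 hpq h2 (le_of_lt h1)
    constructor
    · nlinarith [sq_nonneg (v-1)]
    · nlinarith [sq_nonneg (v-1)]
  · -- v ∈ [0, 1/2)
    have hmem : v ∈ Icc (0:ℝ) (1/2) := mem_Icc.mpr ⟨hv, le_of_lt h2⟩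
    have hhalf : (1/2 : ℝ) ∈ Icc (0:ℝ) (1/2) := mem_Icc.mpr ⟨by norm_num, le_refl _⟩
    have h0mem : (0:ℝ) ∈ Icc (0:ℝ) (1/2) := mem_Icc.mpr ⟨le_refl _, by norm_num⟩
    have anti := P3_anti hq0 hq2 hpq
    have hFupper := anti h0mem hmem hv
    have hFlower := anti hmem hhalf (le_of_lt h2)
    simp only [zero_mul, sub_zero] at hFupper hFlower
    have hF0 : (0:ℝ)^2 - 1 - p*((0:ℝ) ^ q - 1) = p - 1 := by
      rw [Real.zero_rpow hq0.ne']; ring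
    rw [hF0] at hFupper
    have hFhalf := P2_lower hq0 hq2 hpq (le_refl (1/2 : ℝ)) (by norm_num)
    have hsq1 : (v-1)^2 ≤ 1 := by nlinarith
    have hsq2 : 1/4 ≤ (v-1)^2 := by nlinarith
    constructor
    · nlinarith
    · nlinarith

lemma vq_le {q v : ℝ} (hq0 : 0 < q) (hq2 : q < 2) (hv : 0 ≤ v) : v ^ q ≤ 1 + v^2 := by
  rcases le_or_gt v 1 with h | h
  · have := Real.rpow_le_one hv h hq0.le
    nlinarith [sq_nonneg v]
  · have h1 : v ^ q ≤ v ^ (2:ℝ) :=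
      Real.rpow_le_rpow_of_exponent_le (le_of_lt h) (by linarith)
    rw [show v ^ (2:ℝ) = v ^ (2:ℕ) by rw [← Real.rpow_natCast v 2]; norm_num] at h1
    nlinarith

lemma mixed_bounds {p q v : ℝ} (hq0 : 0 < q) (hq2 : q < 2) (hpq : p * q = 2) (hv : 0 ≤ v) :
    (2-q)/8 * (v+1)^2 ≤ v^2 - 1 + p*(v ^ q) + p ∧
    v^2 - 1 + p*(v ^ q) + p ≤ (8 + 4*p) * (v+1)^2 := by
  have hp1 : 1 < p := by nlinarith
  have hvq0 : 0 ≤ v ^ q := Real.rpow_nonneg hv q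
  have h24 : 2 - q ≤ 4*(p-1) := by nlinarith
  constructor
  · nlinarith [mul_nonneg (show (0:ℝ) ≤ 2-q by linarith) (sq_nonneg (v-1)),
      mul_nonneg hq0.le (sq_nonneg v), mul_nonneg hvq0 (by linarith : (0:ℝ) ≤ p)]
  · have hvq := vq_le hq0 hq2 hv
    nlinarith [mul_le_mul_of_nonneg_left hvq (by linarith : (0:ℝ) ≤ p), sq_nonneg v,
      mul_nonneg (by linarith : (0:ℝ) ≤ 8+4*p) hv]

variable {s : ℝ}

lemma uF_of_nonneg (hs0 : 0 < s) {z : ℝ} (hz : 0 ≤ z) : uF s z = z ^ (1/(2*s)) := by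
  rcases eq_or_lt_of_le hz with h | h
  · rw [uF, ← h]
    rw [Real.zero_rpow (by positivity : (1:ℝ)/(2*s) ≠ 0)]
    simp
  · rw [uF, Real.sign_of_pos h, abs_of_pos h, one_mul]

lemma uF_of_neg (hs0 : 0 < s) {z : ℝ} (hz : z < 0) : uF s z = -((-z) ^ (1/(2*s))) := by
  rw [uF, Real.sign_of_neg hz, abs_of_neg hz]
  ring

lemma deltaH_one (hs0 : 0 < s) (hs1 : s < 1) (b : ℝ) :
    deltaH s 1 b = s^2/(1-s) * (|b| ^ (1/s) - 1 - (1/s)*(b-1)) := by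
  have hs' : (1:ℝ) - s ≠ 0 := by intro h; linarith
  rw [deltaH, hFun, hFun, hDeriv]
  rw [abs_one, Real.one_rpow, Real.one_rpow]
  field_simp

lemma oneCase (hs0 : 0 < s) (hs1 : s < 1) (b : ℝ) :
    s^2/(1-s) * ((2-2*s)/8) * (uF s b - 1)^2 ≤ deltaH s 1 b ∧
    deltaH s 1 b ≤ s^2/(1-s) * (8+4*(1/s)) * (uF s b - 1)^2 := by
  have hs' : (0:ℝ) < 1 - s := by linarith
  have hc : (0:ℝ) < s^2/(1-s) := by positivity
  set c := s^2/(1-s) with hcdef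
  set p := 1/s with hpdef
  set q := 2*s with hqdef
  have hq0 : 0 < q := by positivity
  have hq2 : q < 2 := by rw [hqdef]; linarith
  have hpq : p * q = 2 := by rw [hpdef, hqdef]; field_simp
  have hd := deltaH_one hs0 hs1 b
  rcases le_or_gt 0 b with hb | hb
  · -- b ≥ 0
    set v := b ^ (1/(2*s)) with hvdef
    have hv0 : 0 ≤ v := Real.rpow_nonneg hb _
    have hvq : v ^ q = b := by
      rw [hvdef, ← Real.rpow_mul hb]
      rw [show 1/(2*s) * q = 1 by rw [hqdef]; field_simp; try ring]
      exact Real.rpow_one b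
    have hv2 : (v:ℝ)^2 = b ^ (1/s) := by
      rw [hvdef, ← Real.rpow_natCast (b ^ (1/(2*s))) 2, ← Real.rpow_mul hb]
      congr 1
      push_cast
      field_simp
      try ring
    have huF : uF s b = v := uF_of_nonneg hs0 hb
    have habs : |b| = b := abs_of_nonneg hb
    rw [hd, habs, huF, ← hv2, ← hvq]
    have hF := Fcomp hq0 hq2 hpq hv0
    constructor
    · calc c * ((2-2*s)/8) * (v-1)^2 = c * ((2-q)/8 * (v-1)^2) := by rw [hqdef]; ring
        _ ≤ c * (v^2 - 1 - p*(v ^ q - 1)) := by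
            exact mul_le_mul_of_nonneg_left hF.1 hc.le
        _ = c * (v^2 - 1 - 1/s * (v^q - 1)) := by rw [hpdef]
    · calc c * (v^2 - 1 - 1/s * (v^q - 1)) = c * (v^2 - 1 - p*(v ^ q - 1)) := by rw [hpdef]
        _ ≤ c * ((8+4*p) * (v-1)^2) := mul_le_mul_of_nonneg_left hF.2 hc.le
        _ = c * (8+4*(1/s)) * (v-1)^2 := by rw [hpdef]; ring
  · -- b < 0
    set v := (-b) ^ (1/(2*s)) with hvdef
    have hb' : 0 < -b := by linarith
    have hv0 : 0 < v := Real.rpow_pos_of_pos hb' _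
    have hvq : v ^ q = -b := by
      rw [hvdef, ← Real.rpow_mul hb'.le]
      rw [show 1/(2*s) * q = 1 by rw [hqdef]; field_simp; try ring]
      exact Real.rpow_one _
    have hv2 : (v:ℝ)^2 = (-b) ^ (1/s) := by
      rw [hvdef, ← Real.rpow_natCast ((-b) ^ (1/(2*s))) 2, ← Real.rpow_mul hb'.le]
      congr 1
      push_cast
      field_simp
      try ring
    have huF : uF s b = -v := uF_of_neg hs0 hb
    have habs : |b| = -b := abs_of_neg hb
    have hbeq : b = -(v^q) := by rw [hvq]; ring
    have hM := mixed_bounds hq0 hq2 hpq hv0.le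
    have hdval : deltaH s 1 b = c * (v^2 - 1 + p*(v^q) + p) := by
      rw [hd, habs, ← hv2]
      have : b - 1 = -(v^q) - 1 := by rw [← hbeq]
      rw [this, hpdef]
      ring
    rw [hdval, huF]
    constructor
    · calc c * ((2-2*s)/8) * (-v-1)^2 = c * ((2-q)/8 * (v+1)^2) := by rw [hqdef]; ring
        _ ≤ c * (v^2 - 1 + p*(v^q) + p) := mul_le_mul_of_nonneg_left hM.1 hc.le
    · calc c * (v^2 - 1 + p*(v^q) + p) ≤ c * ((8+4*p) * (v+1)^2) :=
            mul_le_mul_of_nonneg_left hM.2 hc.le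
        _ = c * (8+4*(1/s)) * (-v-1)^2 := by rw [hpdef]; ring

lemma uF_zero : uF s 0 = 0 := by simp [uF]

lemma uF_one (hs0 : 0 < s) : uF s 1 = 1 := by
  rw [uF_of_nonneg hs0 zero_le_one, Real.one_rpow]

lemma uF_neg' (z : ℝ) : uF s (-z) = - uF s z := by
  rw [uF, uF, Real.sign_neg, abs_neg]; ring

lemma uF_sq (hs0 : 0 < s) (z : ℝ) : (uF s z)^2 = |z| ^ (1/s) := by
  have he : 1/(2*s) + 1/(2*s) = 1/s := by
    rw [← add_div, show (1:ℝ)+1 = 2 by norm_num,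
      show 2/(2*s) = 2*1/(2*s) by norm_num, mul_div_mul_left _ _ (two_ne_zero)]
  rcases lt_trichotomy z 0 with h | h | h
  · rw [uF_of_neg hs0 h, abs_of_neg h, neg_sq, sq, ← Real.rpow_add (by linarith), he]
  · subst h
    rw [uF_zero, abs_zero, Real.zero_rpow (by positivity : (1:ℝ)/s ≠ 0)]
    norm_num
  · rw [uF_of_nonneg hs0 h.le, abs_of_pos h, sq, ← Real.rpow_add h, he]

lemma uF_scale (hs0 : 0 < s) {t : ℝ} (ht : 0 < t) (z : ℝ) :
    uF s (t*z) = t ^ (1/(2*s)) * uF s z := by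
  rcases lt_trichotomy z 0 with h | h | h
  · have htz : t*z < 0 := mul_neg_of_pos_of_neg ht h
    rw [uF_of_neg hs0 htz, uF_of_neg hs0 h, show -(t*z) = t * (-z) by ring,
      Real.mul_rpow ht.le (by linarith)]
    ring
  · subst h; simp [uF_zero]
  · have htz : 0 < t*z := mul_pos ht h
    rw [uF_of_nonneg hs0 htz.le, uF_of_nonneg hs0 h.le, Real.mul_rpow ht.le h.le]

lemma deltaH_neg (a b : ℝ) : deltaH s (-a) (-b) = deltaH s a b := by
  simp only [deltaH, hFun, hDeriv, abs_neg]
  ring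

lemma deltaH_scale (hs0 : 0 < s) {t : ℝ} (ht : 0 < t) (a b : ℝ) :
    deltaH s (t*a) (t*b) = t ^ (1/s) * deltaH s a b := by
  have key : t ^ (1/s - 2) * (t * t) = t ^ (1/s) := by
    rw [show (1/s : ℝ) = (1/s - 2) + 2 by ring, Real.rpow_add ht,
      show ((2:ℝ)) = ((2:ℕ):ℝ) by norm_num, Real.rpow_natCast]
    ring
  simp only [deltaH, hFun, hDeriv, abs_mul, abs_of_pos ht,
    Real.mul_rpow ht.le (abs_nonneg a), Real.mul_rpow ht.le (abs_nonneg b)]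
  linear_combination (-(s/(1-s) * |a| ^ (1/s-2) * a * (b-a))) * key

lemma deltaH_comp (hs0 : 0 < s) (hs1 : s < 1) (a b : ℝ) :
    s^2/(1-s) * ((2-2*s)/8) * (uF s b - uF s a)^2 ≤ deltaH s a b ∧
    deltaH s a b ≤ s^2/(1-s) * (8+4*(1/s)) * (uF s b - uF s a)^2 := by
  have hs' : (0:ℝ) < 1 - s := by linarith
  have hc : (0:ℝ) < s^2/(1-s) := by positivity
  have main : ∀ a b : ℝ, 0 < a →
      s^2/(1-s) * ((2-2*s)/8) * (uF s b - uF s a)^2 ≤ deltaH s a b ∧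
      deltaH s a b ≤ s^2/(1-s) * (8+4*(1/s)) * (uF s b - uF s a)^2 := by
    intro a b ha
    have hb : b = a * (b/a) := by field_simp
    have hA : 0 < a ^ (1/s) := Real.rpow_pos_of_pos ha _
    have hd : deltaH s a b = a ^ (1/s) * deltaH s 1 (b/a) := by
      have h := deltaH_scale hs0 ha 1 (b/a)
      rw [mul_one, ← hb] at h
      exact h
    have hu : (uF s b - uF s a)^2 = a ^ (1/s) * (uF s (b/a) - 1)^2 := by
      have h1 := uF_scale hs0 ha (b/a)
      rw [← hb] at h1
      have h2 : uF s a = a ^ (1/(2*s)) * 1 := by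
        rw [mul_one, uF_of_nonneg hs0 ha.le]
      have h3 : (a ^ (1/(2*s)))^2 = a ^ (1/s) := by
        rw [sq, ← Real.rpow_add ha,
          ← add_div, show (1:ℝ)+1 = 2 by norm_num,
          show 2/(2*s) = 2*1/(2*s) by norm_num, mul_div_mul_left _ _ (two_ne_zero)]
      rw [h1, h2]
      nlinarith [h3]
    obtain ⟨h1, h2⟩ := oneCase hs0 hs1 (b/a)
    constructor
    · rw [hd, hu]
      nlinarith [mul_le_mul_of_nonneg_left h1 hA.le]
    · rw [hd, hu]
      nlinarith [mul_le_mul_of_nonneg_left h2 hA.le]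
  rcases lt_trichotomy a 0 with ha | ha | ha
  · have := main (-a) (-b) (by linarith)
    rw [deltaH_neg, uF_neg', uF_neg'] at this
    constructor
    · have := this.1; nlinarith [this]
    · have := this.2; nlinarith [this]
  · subst ha
    have hd : deltaH s 0 b = s^2/(1-s) * (uF s b)^2 := by
      have h0 : hFun s 0 = 0 := by
        rw [hFun, abs_zero, Real.zero_rpow (by positivity : (1:ℝ)/s ≠ 0), mul_zero]
      have h1 : hDeriv s 0 = 0 := by rw [hDeriv, mul_zero]
      rw [deltaH, h0, h1, zero_mul, sub_zero, sub_zero, hFun, uF_sq hs0]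
    rw [hd, uF_zero, sub_zero]
    have hsq : 0 ≤ (uF s b)^2 := sq_nonneg _
    constructor
    · nlinarith [mul_nonneg hc.le hsq]
    · nlinarith [mul_nonneg hc.le hsq, mul_nonneg (mul_nonneg hc.le hsq) (by positivity : (0:ℝ) ≤ 1/s)]
  · exact main a b ha

lemma deltaE_nonneg (n : ℕ) (x y : Fin n → ℝ) : 0 ≤ deltaE n x y := by
  apply div_nonneg _ (by norm_num)
  exact Finset.sum_nonneg fun i _ => sq_nonneg _

lemma deltaE_symm (n : ℕ) (x y : Fin n → ℝ) : deltaE n x y = deltaE n y x := by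
  unfold deltaE
  congr 1
  exact Finset.sum_congr rfl fun i _ => by ring

lemma deltaE_tri (n : ℕ) (x₁ x₂ x₃ : Fin n → ℝ) :
    deltaE n x₁ x₂ ≤ 2 * (deltaE n x₁ x₃ + deltaE n x₃ x₂) := by
  unfold deltaE
  have h : ∑ i, (x₂ i - x₁ i)^2 ≤ ∑ i, (2*((x₃ i - x₁ i)^2 + (x₂ i - x₃ i)^2)) :=
    Finset.sum_le_sum (fun i _ => by nlinarith [sq_nonneg ((x₃ i - x₁ i) - (x₂ i - x₃ i))])
  rw [← Finset.mul_sum, Finset.sum_add_distrib] at h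
  linarith [h]


end QuasiDistAux

/-- Corollary 4.5(4): `δ_Φ` is a quasi-distance. -/
theorem deltaPhi_quasi_distance
    (n : ℕ) (hn : 1 ≤ n) (s : ℝ) (hs0 : 0 < s) (hs1 : s < 1) :
    ∃ K : ℝ, 1 ≤ K ∧
      ∀ p₁ p₂ p₃ : (Fin n → ℝ) × ℝ,
        deltaPhi n s p₁ p₂ ≤
          K * (min (deltaPhi n s p₁ p₃) (deltaPhi n s p₃ p₁) +
            min (deltaPhi n s p₂ p₃) (deltaPhi n s p₃ p₂)) := by
  have hs' : (0:ℝ) < 1 - s := by linarith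
  set c1 : ℝ := s^2/(1-s) * ((2-2*s)/8) with hc1def
  set c2 : ℝ := s^2/(1-s) * (8+4*(1/s)) with hc2def
  have hc1 : 0 < c1 := by
    rw [hc1def]
    exact mul_pos (div_pos (pow_pos hs0 2) hs') (div_pos (by linarith) (by norm_num))
  have hc2 : 0 < c2 := by
    rw [hc2def]
    have := one_div_pos.mpr hs0
    exact mul_pos (div_pos (pow_pos hs0 2) hs') (by linarith)
  have hq : (0:ℝ) < c2/c1 := div_pos hc2 hc1
  refine ⟨2 + 2*(c2/c1), by nlinarith, ?_⟩
  intro p₁ p₂ p₃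
  set U1 := uF s p₁.2
  set U2 := uF s p₂.2
  set U3 := uF s p₃.2
  set m1 := min (deltaH s p₁.2 p₃.2) (deltaH s p₃.2 p₁.2) with hm1def
  set m2 := min (deltaH s p₂.2 p₃.2) (deltaH s p₃.2 p₂.2) with hm2def
  have hA : c1 * (U3 - U1)^2 ≤ m1 := by
    apply le_min (deltaH_comp hs0 hs1 _ _).1
    have := (deltaH_comp hs0 hs1 p₃.2 p₁.2).1
    rwa [show (U1 - U3)^2 = (U3 - U1)^2 by ring] at this
  have hB : c1 * (U3 - U2)^2 ≤ m2 := by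
    apply le_min (deltaH_comp hs0 hs1 _ _).1
    have := (deltaH_comp hs0 hs1 p₃.2 p₂.2).1
    rwa [show (U2 - U3)^2 = (U3 - U2)^2 by ring] at this
  have hm1pos : 0 ≤ m1 := le_trans (mul_nonneg hc1.le (sq_nonneg _)) hA
  have hm2pos : 0 ≤ m2 := le_trans (mul_nonneg hc1.le (sq_nonneg _)) hB
  have hH12 : deltaH s p₁.2 p₂.2 ≤ 2*c2*((U3 - U1)^2 + (U3 - U2)^2) := by
    have h := (deltaH_comp hs0 hs1 p₁.2 p₂.2).2
    nlinarith [sq_nonneg ((U3 - U1) - (U3 - U2)), sq_nonneg ((U3-U1) + (U3-U2))]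
  have hkey : c2/c1 * c1 = c2 := div_mul_cancel₀ _ hc1.ne'
  have hHfin : deltaH s p₁.2 p₂.2 ≤ 2*(c2/c1)*(m1 + m2) := by
    nlinarith [mul_le_mul_of_nonneg_left (add_le_add hA hB) hq.le]
  -- deltaE part
  have hEtri := deltaE_tri n p₁.1 p₂.1 p₃.1
  have hmin1 : deltaE n p₁.1 p₃.1 + m1 ≤
      min (deltaPhi n s p₁ p₃) (deltaPhi n s p₃ p₁) := by
    apply le_min
    · exact add_le_add_right (min_le_left _ _) _
    · rw [deltaPhi, deltaE_symm n p₁.1 p₃.1]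
      exact add_le_add_right (min_le_right _ _) _
  have hmin2 : deltaE n p₂.1 p₃.1 + m2 ≤
      min (deltaPhi n s p₂ p₃) (deltaPhi n s p₃ p₂) := by
    apply le_min
    · exact add_le_add_right (min_le_left _ _) _
    · rw [deltaPhi, deltaE_symm n p₂.1 p₃.1]
      exact add_le_add_right (min_le_right _ _) _
  have hstep : deltaPhi n s p₁ p₂ ≤
      (2 + 2*(c2/c1)) * ((deltaE n p₁.1 p₃.1 + m1) + (deltaE n p₂.1 p₃.1 + m2)) := by
    rw [deltaPhi]
    have hE13 : 0 ≤ deltaE n p₁.1 p₃.1 := deltaE_nonneg _ _ _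
    have hE23 : 0 ≤ deltaE n p₂.1 p₃.1 := deltaE_nonneg _ _ _
    have hE32 : deltaE n p₃.1 p₂.1 = deltaE n p₂.1 p₃.1 := deltaE_symm _ _ _
    rw [hE32] at hEtri
    nlinarith [hHfin, hEtri]
  calc deltaPhi n s p₁ p₂ ≤ _ := hstep
    _ ≤ (2 + 2*(c2/c1)) * (min (deltaPhi n s p₁ p₃) (deltaPhi n s p₃ p₁) +
          min (deltaPhi n s p₂ p₃) (deltaPhi n s p₃ p₂)) := by
        apply mul_le_mul_of_nonneg_left (add_le_add hmin1 hmin2) (by nlinarith)
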